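/- Let n ≥ 1, m ≥ 1, let S be any subset of ℚ[x_1,…,x_n], let φ_m be the ℚ-algebra endomorphism of ℚ[x_1,…,x_n] sending x_i to x_i^m for each i, and let I be the ideal generated by {φ_m(Q) : Q ∈ S}. Then for every nonzero P ∈ I there exists a nonzero Q in the ideal ⟨S⟩ such that m·deg_lex(Q) ≤ deg_lex(P) componentwise, i.e., the monomial X^{m·deg_lex(Q)} divides the lex-leading monomial of P. -/

import Mathlib

open MvPolynomial

/-- Lexicographic order on exponent vectors: `ν ≤ μ` iff `ν = μ` or the first entry where
they differ is smaller in `ν` (i.e. the first nonzero entry of `μ - ν` is positive). -/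
def LexLE {n : ℕ} (ν μ : Fin n → ℕ) : Prop :=
  ν = μ ∨ ∃ i : Fin n, (∀ j : Fin n, j < i → ν j = μ j) ∧ ν i < μ i

/-- `δ` is the exponent vector of the lex-leading monomial of `P`. -/
def IsLexLeading {n : ℕ} (P : MvPolynomial (Fin n) ℚ) (δ : Fin n → ℕ) : Prop :=
  P.coeff (Finsupp.equivFunOnFinite.symm δ) ≠ 0 ∧
  ∀ ν : Fin n → ℕ, P.coeff (Finsupp.equivFunOnFinite.symm ν) ≠ 0 → LexLE ν δ

namespace Stmt4Aux

variable {n : ℕ}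

lemma finj (m : ℕ) (hm : 0 < m) (r : Fin n →₀ ℕ) :
    Function.Injective (fun ν : Fin n →₀ ℕ => m • ν + r) := by
  intro a b h
  ext i
  have h' : m * a i + r i = m * b i + r i := by
    have := congrArg (fun g : Fin n →₀ ℕ => g i) h
    simpa using this
  exact Nat.eq_of_mul_eq_mul_left hm (by omega)

/-- Slice extraction: `coeff ν (T m r hm P) = coeff (m • ν + r) P`. -/
noncomputable def T (m : ℕ) (hm : 0 < m) (r : Fin n →₀ ℕ) (P : MvPolynomial (Fin n) ℚ) :
    MvPolynomial (Fin n) ℚ :=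
  Finsupp.comapDomain (fun ν : Fin n →₀ ℕ => m • ν + r)
    (AddMonoidAlgebra.coeff P) (finj m hm r).injOn |> AddMonoidAlgebra.ofCoeff

lemma coeff_T (m : ℕ) (hm : 0 < m) (r : Fin n →₀ ℕ) (P : MvPolynomial (Fin n) ℚ)
    (ν : Fin n →₀ ℕ) : coeff ν (T m hm r P) = coeff (m • ν + r) P :=
  Finsupp.comapDomain_apply ..

lemma T_sum (m : ℕ) (hm : 0 < m) (r : Fin n →₀ ℕ) {X : Type*} (s : Finset X)
    (g : X → MvPolynomial (Fin n) ℚ) :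
    T m hm r (∑ x ∈ s, g x) = ∑ x ∈ s, T m hm r (g x) := by
  apply MvPolynomial.ext
  intro ν
  rw [coeff_T, coeff_sum, coeff_sum]
  exact Finset.sum_congr rfl fun x _ => (coeff_T ..).symm

lemma smul_le_iff (m : ℕ) (r : Fin n →₀ ℕ) (hr : ∀ i, r i < m) (μ ν : Fin n →₀ ℕ) :
    m • μ ≤ m • ν + r ↔ μ ≤ ν := by
  rw [Finsupp.le_def, Finsupp.le_def]
  constructor <;> intro h i <;> have hi := h i <;>
    simp only [Finsupp.smul_apply, Finsupp.add_apply, smul_eq_mul] at *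
  · by_contra hc
    push_neg at hc
    have : ν i + 1 ≤ μ i := hc
    have h2 : m * (ν i + 1) ≤ m * μ i := Nat.mul_le_mul_left m this
    rw [Nat.mul_add, Nat.mul_one] at h2
    have hri := hr i
    omega
  · have : m * μ i ≤ m * ν i := Nat.mul_le_mul_left m hi
    omega

lemma T_mul_monomial (m : ℕ) (hm : 0 < m) (r : Fin n →₀ ℕ) (hr : ∀ i, r i < m)
    (c : MvPolynomial (Fin n) ℚ) (μ : Fin n →₀ ℕ) (a : ℚ) :
    T m hm r (c * monomial (m • μ) a) = T m hm r c * monomial μ a := by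
  apply MvPolynomial.ext
  intro ν
  rw [coeff_T, coeff_mul_monomial', coeff_mul_monomial']
  simp only [smul_le_iff m r hr μ ν]
  by_cases h : μ ≤ ν
  · rw [if_pos h, if_pos h, coeff_T]
    have harg : m • ν + r - m • μ = m • (ν - μ) + r := by
      ext i
      have hle : μ i ≤ ν i := h i
      obtain ⟨k, hk⟩ : ∃ k, ν i = μ i + k := ⟨ν i - μ i, by omega⟩
      simp only [Finsupp.tsub_apply, Finsupp.add_apply, Finsupp.smul_apply, smul_eq_mul, hk, Nat.add_sub_cancel_left,
        Nat.mul_add]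
      omega
    rw [harg]
  · rw [if_neg h, if_neg h]

lemma aeval_pow_monomial (m : ℕ) (hm : 0 < m) (μ : Fin n →₀ ℕ) (a : ℚ) :
    aeval (fun i => (X i : MvPolynomial (Fin n) ℚ) ^ m) (monomial μ a) =
      monomial (m • μ) a := by
  rw [aeval_monomial, monomial_eq]
  congr 1
  rw [Finsupp.prod, Finsupp.prod_of_support_subset (m • μ) (Finsupp.support_smul)
    (fun i k => (X i : MvPolynomial (Fin n) ℚ) ^ k) (fun i _ => pow_zero _)]
  exact Finset.prod_congr rfl fun i _ => by
    rw [Finsupp.smul_apply, smul_eq_mul, pow_mul]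

lemma T_mul_aeval (m : ℕ) (hm : 0 < m) (r : Fin n →₀ ℕ) (hr : ∀ i, r i < m)
    (c Q : MvPolynomial (Fin n) ℚ) :
    T m hm r (c * aeval (fun i => (X i : MvPolynomial (Fin n) ℚ) ^ m) Q) =
      T m hm r c * Q := by
  conv_lhs => rw [show Q = ∑ v ∈ Q.support, monomial v (coeff v Q) from Q.as_sum]
  rw [map_sum, Finset.mul_sum, T_sum]
  have : ∀ v ∈ Q.support,
      T m hm r (c * aeval (fun i => (X i : MvPolynomial (Fin n) ℚ) ^ m)
        (monomial v (coeff v Q))) = T m hm r c * monomial v (coeff v Q) := by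
    intro v _
    rw [aeval_pow_monomial m hm, T_mul_monomial m hm r hr]
  rw [Finset.sum_congr rfl this, ← Finset.mul_sum, ← Q.as_sum]

lemma T_mem (m : ℕ) (hm : 0 < m) (r : Fin n →₀ ℕ) (hr : ∀ i, r i < m)
    (S : Set (MvPolynomial (Fin n) ℚ)) {P : MvPolynomial (Fin n) ℚ}
    (hP : P ∈ Ideal.span
      ((fun Q => aeval (fun i => (X i : MvPolynomial (Fin n) ℚ) ^ m) Q) '' S)) :
    T m hm r P ∈ Ideal.span S := by
  rw [Ideal.span, Submodule.mem_span_set] at hP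
  obtain ⟨c, hsupp, hsum⟩ := hP
  rw [← hsum, Finsupp.sum, T_sum]
  apply Ideal.sum_mem
  intro v hv
  obtain ⟨Q, hQ, rfl⟩ := hsupp hv
  rw [smul_eq_mul, T_mul_aeval m hm r hr]
  exact Ideal.mul_mem_left _ _ (Ideal.subset_span hQ)

end Stmt4Aux

theorem stmt4 (n m : ℕ) (hn : 1 ≤ n) (hm : 1 ≤ m)
    (S : Set (MvPolynomial (Fin n) ℚ))
    (P : MvPolynomial (Fin n) ℚ)
    (hP : P ∈ Ideal.span
      ((fun Q => aeval (fun i => (X i : MvPolynomial (Fin n) ℚ) ^ m) Q) '' S))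
    (hP0 : P ≠ 0) (δP : Fin n → ℕ) (hδP : IsLexLeading P δP) :
    ∃ Q ∈ Ideal.span S, Q ≠ 0 ∧
      ∃ δQ : Fin n → ℕ, IsLexLeading Q δQ ∧ ∀ i, m * δQ i ≤ δP i := by
  have hm0 : 0 < m := hm
  set r : Fin n →₀ ℕ := Finsupp.equivFunOnFinite.symm (fun i => δP i % m) with hrdef
  have hr : ∀ i, r i < m := fun i => by
    simp only [hrdef, Finsupp.coe_equivFunOnFinite_symm]
    exact Nat.mod_lt _ hm0
  set δQ : Fin n → ℕ := fun i => δP i / m with hδQdef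
  set Q : MvPolynomial (Fin n) ℚ := Stmt4Aux.T m hm0 r P with hQdef
  -- key: for any ν : Fin n → ℕ, m • symm ν + r = symm (fun i => m * ν i + δP i % m)
  have hkey : ∀ ν : Fin n → ℕ,
      m • Finsupp.equivFunOnFinite.symm ν + r =
        Finsupp.equivFunOnFinite.symm (fun i => m * ν i + δP i % m) := by
    intro ν
    ext i
    simp [hrdef]
  have hkeyQ : (fun i => m * δQ i + δP i % m) = δP := by
    funext i
    show m * (δP i / m) + δP i % m = δP i
    have := Nat.div_add_mod (δP i) m
    omega
  have hcoeffQ : ∀ ν : Fin n → ℕ,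
      Q.coeff (Finsupp.equivFunOnFinite.symm ν) =
        P.coeff (Finsupp.equivFunOnFinite.symm (fun i => m * ν i + δP i % m)) := by
    intro ν
    rw [hQdef, Stmt4Aux.coeff_T, hkey]
  have hQlead : Q.coeff (Finsupp.equivFunOnFinite.symm δQ) ≠ 0 := by
    rw [hcoeffQ, hkeyQ]
    exact hδP.1
  refine ⟨Q, Stmt4Aux.T_mem m hm0 r hr S hP, ?_, δQ, ⟨hQlead, ?_⟩, ?_⟩
  · intro h
    exact hQlead (by rw [h]; simp)
  · intro ν hν
    rw [hcoeffQ] at hν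
    have hlex := hδP.2 _ hν
    rcases hlex with heq | ⟨i, hpre, hlt⟩
    · left
      funext i
      have h1 : m * ν i + δP i % m = δP i := congrFun heq i
      have h2 : m * δQ i + δP i % m = δP i := congrFun hkeyQ i
      exact Nat.eq_of_mul_eq_mul_left hm0 (by omega)
    · right
      refine ⟨i, fun j hj => ?_, ?_⟩
      · have h1 : m * ν j + δP j % m = δP j := hpre j hj
        have h2 : m * δQ j + δP j % m = δP j := congrFun hkeyQ j
        exact Nat.eq_of_mul_eq_mul_left hm0 (by omega)
      · have h1 : m * ν i + δP i % m < δP i := hlt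
        have h2 : m * δQ i + δP i % m = δP i := congrFun hkeyQ i
        have : m * ν i < m * δQ i := by omega
        exact Nat.lt_of_mul_lt_mul_left this
  · intro i
    show m * (δP i / m) ≤ δP i
    have := Nat.div_add_mod (δP i) m
    omega
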